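/- The central set of the family of generalized exponential polynomials equals the common zero set of its first c_{p,q,m}+1 Maclaurin coefficients: {λ ∈ ℂ^N : f_λ(z) = 0 for all z ∈ ℂ} = {λ ∈ ℂ^N : a₀(λ) = a₁(λ) = ⋯ = a_{c_{p,q,m}}(λ) = 0}. -/

import Mathlib

open Polynomial Finset

noncomputable section

namespace GEPaux

lemma entire_deriv {f : ℂ → ℂ} (hf : Differentiable ℂ f) : Differentiable ℂ (deriv f) := by
  have h : AnalyticOnNhd ℂ f Set.univ := fun z _ => hf.analyticAt z
  exact fun z => ((h.deriv) z trivial).differentiableAt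

lemma entire_iteratedDeriv {f : ℂ → ℂ} (hf : Differentiable ℂ f) (n : ℕ) :
    Differentiable ℂ (iteratedDeriv n f) := by
  induction n generalizing f with
  | zero => simpa [iteratedDeriv_zero]
  | succ n ih => rw [iteratedDeriv_succ']; exact ih (entire_deriv hf)

lemma iteratedDeriv_zero_fun (n : ℕ) : iteratedDeriv n (fun _ : ℂ => (0:ℂ)) = fun _ => 0 := by
  induction n with
  | zero => simp [iteratedDeriv_zero]
  | succ n ih =>
    rw [iteratedDeriv_succ']
    have : (deriv fun _ : ℂ => (0:ℂ)) = fun _ => (0:ℂ) := by funext z; simp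
    rw [this, ih]

lemma iteratedDeriv_fun_add {f g : ℂ → ℂ} (hf : Differentiable ℂ f) (hg : Differentiable ℂ g)
    (n : ℕ) : iteratedDeriv n (fun z => f z + g z)
      = fun z => iteratedDeriv n f z + iteratedDeriv n g z := by
  induction n generalizing f g with
  | zero => simp [iteratedDeriv_zero]
  | succ n ih =>
    rw [iteratedDeriv_succ', iteratedDeriv_succ', iteratedDeriv_succ']
    have : (deriv fun z => f z + g z) = fun z => deriv f z + deriv g z := by
      funext z; exact deriv_add (hf z) (hg z)
    rw [this, ih (entire_deriv hf) (entire_deriv hg)]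

lemma iteratedDeriv_fun_sum {ι : Type*} (s : Finset ι) (f : ι → ℂ → ℂ)
    (hf : ∀ i ∈ s, Differentiable ℂ (f i)) (n : ℕ) :
    iteratedDeriv n (fun z => ∑ i ∈ s, f i z) = fun z => ∑ i ∈ s, iteratedDeriv n (f i) z := by
  classical
  induction s using Finset.induction_on with
  | empty => simpa using iteratedDeriv_zero_fun n
  | @insert a s ha ih =>
    have h1 : Differentiable ℂ (f a) := hf a (mem_insert_self a s)
    have h2 : Differentiable ℂ (fun z => ∑ i ∈ s, f i z) :=
      Differentiable.fun_sum fun i hi => hf i (mem_insert_of_mem hi)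
    have e1 : (fun z => ∑ i ∈ insert a s, f i z) = fun z => f a z + ∑ i ∈ s, f i z := by
      funext z; exact Finset.sum_insert ha
    rw [e1, iteratedDeriv_fun_add h1 h2 n, ih (fun i hi => hf i (mem_insert_of_mem hi))]
    funext z; rw [Finset.sum_insert ha]

lemma iteratedDeriv_iteratedDeriv {f : ℂ → ℂ} (i r : ℕ) :
    iteratedDeriv i (iteratedDeriv r f) = iteratedDeriv (i + r) f := by
  induction i with
  | zero => simp
  | succ i ih =>
    have : i + 1 + r = (i + r) + 1 := by omega
    rw [this, iteratedDeriv_succ, ih, ← iteratedDeriv_succ]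

/-- Leibniz rule for iterated derivatives of entire functions. -/
lemma iteratedDeriv_fun_mul {f g : ℂ → ℂ} (hf : Differentiable ℂ f) (hg : Differentiable ℂ g)
    (n : ℕ) : iteratedDeriv n (fun z => f z * g z) =
      fun z => ∑ i ∈ range (n + 1),
        (n.choose i : ℂ) * (iteratedDeriv i f z * iteratedDeriv (n - i) g z) := by
  induction n generalizing f g with
  | zero => simp [iteratedDeriv_zero]
  | succ n ih =>
    rw [iteratedDeriv_succ']
    have hd : (deriv fun z => f z * g z) = fun z => deriv f z * g z + f z * deriv g z := by
      funext z; exact deriv_mul (hf z) (hg z)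
    rw [hd, iteratedDeriv_fun_add (f := fun z => deriv f z * g z) (g := fun z => f z * deriv g z) ((entire_deriv hf).mul hg) (hf.mul (entire_deriv hg)) n,
      ih (entire_deriv hf) hg, ih hf (entire_deriv hg)]
    funext z
    have e1 : ∀ i, iteratedDeriv i (deriv f) z = iteratedDeriv (i+1) f z := by
      intro i; rw [← iteratedDeriv_succ']
    have e2 : ∀ i, iteratedDeriv i (deriv g) z = iteratedDeriv (i+1) g z := by
      intro i; rw [← iteratedDeriv_succ']
    simp only [e1, e2]
    set h : ℕ → ℂ := fun i => iteratedDeriv i f z with hh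
    set u : ℕ → ℂ := fun j => iteratedDeriv j g z with hu
    -- RHS decomposition
    have R : ∑ i ∈ range (n + 1 + 1), ((n+1).choose i : ℂ) * (h i * u (n + 1 - i))
        = (∑ j ∈ range (n+1), ((n.choose j : ℂ) + (n.choose (j+1) : ℂ)) * (h (j+1) * u (n - j)))
          + h 0 * u (n+1) := by
      rw [Finset.sum_range_succ']
      congr 1
      · refine Finset.sum_congr rfl fun j hj => ?_
        have e : n + 1 - (j+1) = n - j := by omega
        rw [e, Nat.choose_succ_succ]
        push_cast
        ring
      · simp
    have S2 : ∑ i ∈ range (n + 1), (n.choose i : ℂ) * (h i * u (n - i + 1))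
        = (∑ i ∈ range n, (n.choose (i+1) : ℂ) * (h (i+1) * u (n - i))) + h 0 * u (n+1) := by
      rw [Finset.sum_range_succ']
      congr 1
      · refine Finset.sum_congr rfl fun i hi => ?_
        have hi' : i < n := Finset.mem_range.mp hi
        have e : n - (i+1) + 1 = n - i := by omega
        rw [e]
      · simp
    have S3 : ∑ j ∈ range (n+1), (n.choose (j+1) : ℂ) * (h (j+1) * u (n - j))
        = ∑ i ∈ range n, (n.choose (i+1) : ℂ) * (h (i+1) * u (n - i)) := by
      rw [Finset.sum_range_succ]
      simp [Nat.choose_succ_self]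
    rw [R, S2]
    simp only [add_mul, Finset.sum_add_distrib, S3]
    ring

/-- Maclaurin series of a function as a formal power series. -/
def TS (f : ℂ → ℂ) : PowerSeries ℂ := PowerSeries.mk fun n => iteratedDeriv n f 0 / n.factorial

@[simp] lemma TS_coeff (f : ℂ → ℂ) (n : ℕ) :
    PowerSeries.coeff n (TS f) = iteratedDeriv n f 0 / n.factorial := by
  simp [TS]

lemma iteratedDeriv_polyeval (P : Polynomial ℂ) (n : ℕ) :
    iteratedDeriv n (fun z => P.eval z) = fun z => (derivative^[n] P).eval z := by
  induction n generalizing P with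
  | zero => simp
  | succ n ih =>
    rw [iteratedDeriv_succ', Function.iterate_succ_apply]
    have : (deriv fun z => P.eval z) = fun z => (derivative P).eval z := by
      funext z; exact Polynomial.deriv P
    rw [this, ih]

lemma TS_poly (P : Polynomial ℂ) : TS (fun z => P.eval z) = (P : PowerSeries ℂ) := by
  ext n
  rw [TS_coeff, Polynomial.coeff_coe, iteratedDeriv_polyeval]
  have h0 : (derivative^[n] P).eval 0 = (derivative^[n] P).coeff 0 := by
    rw [Polynomial.coeff_zero_eq_eval_zero]
  simp only [h0, Polynomial.coeff_iterate_derivative]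
  have hd : (0 + n).descFactorial n = n.factorial := by
    simp [Nat.descFactorial_self]
  rw [hd, zero_add, nsmul_eq_mul]
  have : (n.factorial : ℂ) ≠ 0 := by exact_mod_cast n.factorial_ne_zero
  field_simp

lemma TS_mul {f g : ℂ → ℂ} (hf : Differentiable ℂ f) (hg : Differentiable ℂ g) :
    TS (fun z => f z * g z) = TS f * TS g := by
  ext n
  rw [PowerSeries.coeff_mul, Finset.Nat.sum_antidiagonal_eq_sum_range_succ_mk, TS_coeff,
    iteratedDeriv_fun_mul hf hg]
  simp only [TS_coeff]
  rw [Finset.sum_div]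
  refine Finset.sum_congr rfl fun i hi => ?_
  have hin : i ≤ n := Nat.lt_succ_iff.mp (Finset.mem_range.mp hi)
  have hfact : (n.choose i) * i.factorial * (n - i).factorial = n.factorial :=
    Nat.choose_mul_factorial_mul_factorial hin
  have hfc : ((n.choose i : ℕ) : ℂ) * (i.factorial : ℂ) * ((n - i).factorial : ℂ)
      = (n.factorial : ℂ) := by exact_mod_cast congrArg (Nat.cast : ℕ → ℂ) hfact
  have h1 : (i.factorial : ℂ) ≠ 0 := by exact_mod_cast i.factorial_ne_zero
  have h2 : ((n - i).factorial : ℂ) ≠ 0 := by exact_mod_cast (n - i).factorial_ne_zero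
  have h3 : (n.factorial : ℂ) ≠ 0 := by exact_mod_cast n.factorial_ne_zero
  have hC : ((n.choose i : ℕ) : ℂ) ≠ 0 := by exact_mod_cast (Nat.choose_pos hin).ne'
  rw [← hfc]
  field_simp

lemma TS_sum {ι : Type*} (s : Finset ι) (f : ι → ℂ → ℂ)
    (hf : ∀ i ∈ s, Differentiable ℂ (f i)) :
    TS (fun z => ∑ i ∈ s, f i z) = ∑ i ∈ s, TS (f i) := by
  ext n
  rw [TS_coeff, iteratedDeriv_fun_sum s f hf n]
  simp only [map_sum, TS_coeff]
  rw [Finset.sum_div]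

/-- The polynomial coefficients of iterated derivatives of `P·e^Q`. -/
def Apoly (Q : Polynomial ℂ) (P : Polynomial ℂ) : ℕ → Polynomial ℂ
  | 0 => P
  | r + 1 => derivative (Apoly Q P r) + Apoly Q P r * derivative Q

lemma polyexp_entire (P Q : Polynomial ℂ) :
    Differentiable ℂ (fun z => P.eval z * Complex.exp (Q.eval z)) :=
  (P.differentiable).mul ((Q.differentiable).cexp)

lemma polyexp_hasDerivAt (A Q : Polynomial ℂ) (z : ℂ) :
    HasDerivAt (fun z => A.eval z * Complex.exp (Q.eval z))
      ((derivative A + A * derivative Q).eval z * Complex.exp (Q.eval z)) z := by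
  have h := (A.hasDerivAt z).fun_mul ((Q.hasDerivAt z).cexp)
  refine h.congr_deriv ?_
  simp [Polynomial.eval_add, Polynomial.eval_mul]
  ring

lemma iteratedDeriv_polyexp (P Q : Polynomial ℂ) (n : ℕ) :
    iteratedDeriv n (fun z => P.eval z * Complex.exp (Q.eval z))
      = fun z => (Apoly Q P n).eval z * Complex.exp (Q.eval z) := by
  induction n generalizing P with
  | zero => simp [Apoly]
  | succ n ih =>
    rw [iteratedDeriv_succ', show (Apoly Q P (n+1)) = Apoly Q (derivative P + P * derivative Q) n
      from ?_]
    · have hd : (deriv fun z => P.eval z * Complex.exp (Q.eval z))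
          = fun z => (derivative P + P * derivative Q).eval z * Complex.exp (Q.eval z) := by
        funext z; exact (polyexp_hasDerivAt P Q z).deriv
      rw [hd, ih]
    · -- Apoly commutes with one step
      clear ih
      induction n with
      | zero => simp [Apoly]
      | succ n ih2 =>
        have e : Apoly Q P (n+1+1) = derivative (Apoly Q P (n+1)) + Apoly Q P (n+1) * derivative Q := rfl
        rw [e, ih2]; rfl

lemma Apoly_natDegree {p q : ℕ} (P Q : Polynomial ℂ) (hP : P.natDegree ≤ p)
    (hQ : Q.natDegree ≤ q) (r : ℕ) : (Apoly Q P r).natDegree ≤ p + r * (q - 1) := by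
  induction r with
  | zero => simpa [Apoly]
  | succ r ih =>
    have hd : (derivative (Apoly Q P r)).natDegree ≤ p + r * (q-1) :=
      le_trans (natDegree_derivative_le _) (le_trans (Nat.sub_le _ _) ih)
    have hq' : (derivative Q).natDegree ≤ q - 1 :=
      le_trans (natDegree_derivative_le _) (Nat.sub_le_sub_right hQ 1)
    have hm : ((Apoly Q P r) * derivative Q).natDegree ≤ p + r * (q-1) + (q-1) :=
      le_trans (natDegree_mul_le) (add_le_add ih hq')
    refine le_trans (natDegree_add_le _ _) ?_
    refine max_le (le_trans hd ?_) (le_trans hm ?_) <;> ring_nf <;> omega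

lemma degree_clash {a b w : Polynomial ℂ} (ha : a ≠ 0) (hb : b ≠ 0) (hw : w ≠ 0)
    (h : a * derivative b - b * derivative a = a * b * w) : False := by
  have hRHS : a * b * w ≠ 0 := mul_ne_zero (mul_ne_zero ha hb) hw
  have hna : (a * b * w).natDegree = a.natDegree + b.natDegree + w.natDegree := by
    rw [natDegree_mul (mul_ne_zero ha hb) hw, natDegree_mul ha hb]
  by_cases h0 : a.natDegree = 0 ∧ b.natDegree = 0
  · obtain ⟨h0a, h0b⟩ := h0
    have hda : derivative a = 0 := by
      rw [Polynomial.eq_C_of_natDegree_eq_zero h0a]; simp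
    have hdb : derivative b = 0 := by
      rw [Polynomial.eq_C_of_natDegree_eq_zero h0b]; simp
    rw [hda, hdb] at h
    exact hRHS (by rw [← h]; ring)
  · have hsum : 1 ≤ a.natDegree + b.natDegree := by omega
    have hb1 : (a * derivative b).natDegree ≤ a.natDegree + b.natDegree - 1 := by
      by_cases hdb : derivative b = 0
      · simp [hdb]
      · have hdegb : 1 ≤ b.natDegree := Nat.pos_of_ne_zero
          (fun h0 => hdb (by rw [Polynomial.eq_C_of_natDegree_eq_zero h0]; simp))
        refine le_trans natDegree_mul_le ?_
        have := natDegree_derivative_le b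
        omega
    have hb2 : (b * derivative a).natDegree ≤ a.natDegree + b.natDegree - 1 := by
      by_cases hda : derivative a = 0
      · simp [hda]
      · have hdega : 1 ≤ a.natDegree := Nat.pos_of_ne_zero
          (fun h0 => hda (by rw [Polynomial.eq_C_of_natDegree_eq_zero h0]; simp))
        refine le_trans natDegree_mul_le ?_
        have := natDegree_derivative_le a
        omega
    have hLHS : (a * derivative b - b * derivative a).natDegree ≤ a.natDegree + b.natDegree - 1 :=
      le_trans (natDegree_sub_le _ _) (max_le hb1 hb2)
    rw [h, hna] at hLHS
    omega

/-- Key algebraic kernel lemma: the columns of the Wronskian-type matrix of the system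
`(P_k, Q_k)` admit no nontrivial polynomial relation using the first `s` rows. -/
lemma no_kernel : ∀ (s : ℕ) (P Q c : Fin s → Polynomial ℂ), (∀ k, P k ≠ 0) →
    (∀ k l, k ≠ l → derivative (Q k) ≠ derivative (Q l)) →
    (∀ r : ℕ, r < s → ∑ k, c k * Apoly (Q k) (P k) r = 0) → ∀ k, c k = 0 := by
  intro s
  induction s with
  | zero => intro _ _ _ _ _ _ k; exact k.elim0
  | succ t ih =>
    intro P Q c hP hQ hrel
    -- auxiliary: a relation vector vanishing somewhere vanishes everywhere
    have key : ∀ (e : Fin (t+1) → Polynomial ℂ),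
        (∀ r : ℕ, r < t → ∑ k, e k * Apoly (Q k) (P k) r = 0) →
        (∃ k₀, e k₀ = 0) → ∀ k, e k = 0 := by
      intro e hrel' ⟨k₀, hk₀⟩
      have hsub : ∀ j : Fin t, e (k₀.succAbove j) = 0 := by
        have := ih (fun j => P (k₀.succAbove j)) (fun j => Q (k₀.succAbove j))
          (fun j => e (k₀.succAbove j)) (fun j => hP _)
          (fun j l hjl => hQ _ _ (fun heq => hjl (Fin.succAbove_right_injective heq)))
          (fun r hr => by
            have h2 := hrel' r hr
            rw [Fin.sum_univ_succAbove _ k₀, hk₀, zero_mul, zero_add] at h2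
            exact h2)
        exact this
      intro k
      rcases eq_or_ne k k₀ with rfl | hk
      · exact hk₀
      · obtain ⟨j, hj⟩ := Fin.exists_succAbove_eq hk
        rw [← hj]; exact hsub j
    by_cases hex : ∃ k₀, c k₀ = 0
    · exact key c (fun r hr => hrel r (by omega)) hex
    · push_neg at hex
      exfalso
      -- all c k ≠ 0 : derive a contradiction
      rcases Nat.eq_zero_or_pos t with rfl | ht
      · have h0 := hrel 0 (by omega)
        rw [Fin.sum_univ_one] at h0
        exact hex 0 (by
          rcases mul_eq_zero.mp h0 with h | h
          · exact h
          · exact absurd h (hP 0))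
      -- differentiate the relations
      have drel : ∀ r : ℕ, r < t →
          ∑ k, (derivative (c k) - c k * derivative (Q k)) * Apoly (Q k) (P k) r = 0 := by
        intro r hr
        have h1 := congrArg derivative (hrel r (by omega))
        rw [derivative_sum] at h1
        simp only [derivative_mul, derivative_zero] at h1
        have hA : ∀ k : Fin (t+1), derivative (Apoly (Q k) (P k) r)
            = Apoly (Q k) (P k) (r+1) - Apoly (Q k) (P k) r * derivative (Q k) := by
          intro k
          have : Apoly (Q k) (P k) (r+1)
              = derivative (Apoly (Q k) (P k) r) + Apoly (Q k) (P k) r * derivative (Q k) := rfl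
          rw [this]; ring
        calc ∑ k, (derivative (c k) - c k * derivative (Q k)) * Apoly (Q k) (P k) r
            = (∑ k, (derivative (c k) * Apoly (Q k) (P k) r + c k * derivative (Apoly (Q k) (P k) r)))
              - ∑ k, c k * Apoly (Q k) (P k) (r+1) := by
              rw [← Finset.sum_sub_distrib]
              refine Finset.sum_congr rfl fun k _ => ?_
              rw [hA k]; ring
          _ = 0 - 0 := by rw [h1, hrel (r+1) (by omega)]
          _ = 0 := by ring
      set d : Fin (t+1) → Polynomial ℂ := fun k => derivative (c k) - c k * derivative (Q k) with hd
      set k₀ : Fin (t+1) := 0 with hk₀def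
      set e : Fin (t+1) → Polynomial ℂ := fun k => c k₀ * d k - d k₀ * c k with he
      have erel : ∀ r : ℕ, r < t → ∑ k, e k * Apoly (Q k) (P k) r = 0 := by
        intro r hr
        have : ∑ k, e k * Apoly (Q k) (P k) r
            = c k₀ * (∑ k, d k * Apoly (Q k) (P k) r) - d k₀ * (∑ k, c k * Apoly (Q k) (P k) r) := by
          rw [Finset.mul_sum, Finset.mul_sum, ← Finset.sum_sub_distrib]
          refine Finset.sum_congr rfl fun k _ => ?_
          simp only [he]; ring
        rw [this, drel r hr, hrel r (by omega), mul_zero, mul_zero, sub_zero]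
      have eall : ∀ k, e k = 0 := key e erel ⟨k₀, by ring⟩
      -- pick k₁ ≠ k₀
      have hk1 : (⟨1, by omega⟩ : Fin (t+1)) ≠ k₀ := by
        simp only [hk₀def, Ne, Fin.ext_iff, Fin.val_zero]
        omega
      set k₁ : Fin (t+1) := ⟨1, by omega⟩
      have he1 := eall k₁
      simp only [he, hd, sub_eq_zero] at he1
      -- c k₀ * (c k₁' - c k₁ Q k₁') = (c k₀' - c k₀ Q k₀') * c k₁
      have hw : derivative (Q k₁) - derivative (Q k₀) ≠ 0 :=
        sub_ne_zero_of_ne (hQ k₁ k₀ hk1)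
      refine degree_clash (hex k₀) (hex k₁) hw ?_
      have := he1
      ring_nf at this ⊢
      linear_combination this

/-- The Wronskian-type polynomial determinant of the system is nonzero. -/
lemma detA_ne_zero (s : ℕ) (P Q : Fin s → Polynomial ℂ) (hP : ∀ k, P k ≠ 0)
    (hQ : ∀ k l, k ≠ l → derivative (Q k) ≠ derivative (Q l)) :
    (Matrix.of fun k r : Fin s => Apoly (Q k) (P k) (r : ℕ)).det ≠ 0 := by
  intro h0
  set F := RatFunc ℂ
  set φ : Polynomial ℂ →+* F := (algebraMap (Polynomial ℂ) F : Polynomial ℂ →+* F) with hφ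
  have hφinj : Function.Injective φ := IsFractionRing.injective (Polynomial ℂ) F
  set M : Matrix (Fin s) (Fin s) F :=
    (φ.mapMatrix (Matrix.of fun k r : Fin s => Apoly (Q k) (P k) (r : ℕ))).transpose with hM
  have hdet : M.det = 0 := by
    rw [hM, Matrix.det_transpose, ← RingHom.map_det, h0, map_zero]
  obtain ⟨v, hv0, hvker⟩ := Matrix.exists_mulVec_eq_zero_iff.mpr hdet
  obtain ⟨b, hb⟩ := IsLocalization.exist_integer_multiples
    (nonZeroDivisors (Polynomial ℂ)) (Finset.univ) v
  classical
  choose cc hcc using fun k : Fin s => hb k (Finset.mem_univ k)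
  have hbne : φ (b : Polynomial ℂ) ≠ 0 := fun hc =>
    nonZeroDivisors.ne_zero b.2 (hφinj (by rwa [map_zero]))
  have hrel : ∀ r : ℕ, r < s → ∑ k, cc k * Apoly (Q k) (P k) r = 0 := by
    intro r hr
    apply hφinj
    rw [map_sum, map_zero]
    have h1 : ∀ k : Fin s, φ (cc k * Apoly (Q k) (P k) r)
        = (φ (b : Polynomial ℂ) * v k) * φ (Apoly (Q k) (P k) r) := by
      intro k
      rw [map_mul]
      congr 1
      rw [hcc k]
      exact Algebra.smul_def _ _
    calc ∑ k, φ (cc k * Apoly (Q k) (P k) r)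
        = φ (b : Polynomial ℂ) * ∑ k, M ⟨r, hr⟩ k * v k := by
          rw [Finset.mul_sum]
          refine Finset.sum_congr rfl fun k _ => ?_
          rw [h1 k, hM]
          simp only [Matrix.transpose_apply, RingHom.mapMatrix_apply, Matrix.map_apply,
            Matrix.of_apply]
          ring
      _ = 0 := by
          have := congrFun hvker ⟨r, hr⟩
          simp only [Matrix.mulVec, dotProduct, Pi.zero_apply] at this
          rw [this, mul_zero]
  have hcc0 := no_kernel s P Q cc hP hQ hrel
  obtain ⟨k, hk⟩ : ∃ k, v k ≠ 0 := by
    by_contra hall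
    push_neg at hall
    exact hv0 (funext hall)
  apply hk
  have : φ (cc k) = φ (b : Polynomial ℂ) * v k := by rw [hcc k]; exact Algebra.smul_def _ _
  rw [hcc0 k, map_zero] at this
  rcases mul_eq_zero.mp this.symm with h | h
  · exact absurd h hbne
  · exact h

/-- Main quantitative lemma: a nontrivial reduced exponential polynomial cannot have all
Maclaurin coefficients up to `c` equal to zero. -/
lemma main_lemma (p q : ℕ) (s : ℕ) (P Q : Fin s → Polynomial ℂ)
    (hP0 : ∀ k, P k ≠ 0) (hPd : ∀ k, (P k).natDegree ≤ p) (hQd : ∀ k, (Q k).natDegree ≤ q)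
    (hQ : ∀ k l, k ≠ l → derivative (Q k) ≠ derivative (Q l))
    (hvan : ∀ n ≤ (s - 1) + (s * p + (q - 1) * (s * (s - 1) / 2)),
      iteratedDeriv n (fun z => ∑ k, (P k).eval z * Complex.exp ((Q k).eval z)) 0 = 0) :
    s = 0 := by
  by_contra hs
  obtain ⟨t, rfl⟩ := Nat.exists_eq_succ_of_ne_zero hs
  classical
  set f : ℂ → ℂ := fun z => ∑ k : Fin (t+1), (P k).eval z * Complex.exp ((Q k).eval z) with hf
  have hfk : ∀ k : Fin (t+1), Differentiable ℂ (fun z => (P k).eval z * Complex.exp ((Q k).eval z)) :=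
    fun k => polyexp_entire _ _
  set τ : Fin (t+1) → PowerSeries ℂ := fun k => TS (fun z => Complex.exp ((Q k).eval z)) with hτ
  set D : ℕ := (t+1) * p + (q - 1) * ((t+1) * (t+1-1) / 2) with hD
  set Vmat : Matrix (Fin (t+1)) (Fin (t+1)) (Polynomial ℂ) :=
    Matrix.of fun k r : Fin (t+1) => Apoly (Q k) (P k) (r : ℕ) with hV
  have hVne : Vmat.det ≠ 0 := detA_ne_zero (t+1) P Q hP0 hQ
  have hgauss : ∑ i : Fin (t+1), (p + (i:ℕ) * (q-1)) = D := by
    rw [Finset.sum_add_distrib, Finset.sum_const, card_univ, Fintype.card_fin, smul_eq_mul]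
    congr 1
    rw [← Finset.sum_mul]
    have h1 : ∑ i : Fin (t+1), (i : ℕ) = (t+1) * (t+1-1) / 2 := by
      have h3 : ∑ i : Fin (t+1), (i : ℕ) = ∑ i ∈ range (t+1), i :=
        Fin.sum_univ_eq_sum_range (fun i => i) (t+1)
      rw [h3]
      have h2 := Finset.sum_range_id_mul_two (t+1)
      omega
    rw [h1, mul_comm]
  have hVdeg : Vmat.det.natDegree ≤ D := by
    rw [Matrix.det_apply']
    refine natDegree_sum_le_of_forall_le _ _ fun σ _ => ?_
    refine le_trans natDegree_mul_le ?_
    rw [natDegree_intCast, zero_add]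
    refine le_trans (natDegree_prod_le Finset.univ fun i => Vmat (σ i) i) ?_
    rw [← hgauss]
    refine Finset.sum_le_sum fun i _ => ?_
    exact Apoly_natDegree _ _ (hPd _) (hQd _) _
  set ψ : Polynomial ℂ →+* PowerSeries ℂ := Polynomial.coeToPowerSeries.ringHom with hψ
  set N : Matrix (Fin (t+1)) (Fin (t+1)) (PowerSeries ℂ) :=
    Matrix.of fun k r : Fin (t+1) => τ k * ψ (Apoly (Q k) (P k) (r : ℕ)) with hN
  have hNdet : N.det = (∏ k, τ k) * ψ Vmat.det := by
    have e : N = Matrix.of fun k r => τ k * (ψ.mapMatrix Vmat) k r := rfl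
    rw [e, Matrix.det_mul_column, ← RingHom.map_det]
  have hrow : ∀ r : Fin (t+1), ∑ k, N k r = TS (iteratedDeriv (r : ℕ) f) := by
    intro r
    have h1 : iteratedDeriv (r:ℕ) f
        = fun z => ∑ k, (Apoly (Q k) (P k) (r:ℕ)).eval z * Complex.exp ((Q k).eval z) := by
      rw [hf, iteratedDeriv_fun_sum _ _ (fun k _ => hfk k)]
      funext z
      exact Finset.sum_congr rfl fun k _ => by rw [iteratedDeriv_polyexp]
    rw [h1, TS_sum _ _ (fun k _ => polyexp_entire _ _)]
    refine Finset.sum_congr rfl fun k _ => ?_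
    rw [hN]
    simp only [Matrix.of_apply]
    rw [TS_mul (Polynomial.differentiable _) ((Q k).differentiable.cexp), TS_poly]
    rw [hτ, hψ]
    simp only [Polynomial.coeToPowerSeries.ringHom_apply]
    ring
  set klast : Fin (t+1) := Fin.last t with hkl
  set N' : Matrix (Fin (t+1)) (Fin (t+1)) (PowerSeries ℂ) :=
    N.updateRow klast (fun r => TS (iteratedDeriv (r : ℕ) f)) with hN'
  have hdet' : N'.det = N.det := by
    have e : (fun r : Fin (t+1) => TS (iteratedDeriv (r:ℕ) f))
        = ∑ k, (fun _ => (1 : PowerSeries ℂ)) k • N k := by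
      funext r
      rw [Finset.sum_apply]
      rw [← hrow r]
      exact Finset.sum_congr rfl fun k _ => by simp
    rw [hN', e, Matrix.det_updateRow_sum, one_smul]
  have hdvd : (PowerSeries.X : PowerSeries ℂ)^(D+1) ∣ N'.det := by
    have hcol : ∀ r : Fin (t+1), (PowerSeries.X : PowerSeries ℂ)^(D+1) ∣ N' klast r := by
      intro r
      rw [hN', Matrix.updateRow_self]
      rw [PowerSeries.X_pow_dvd_iff]
      intro i hi
      rw [TS_coeff, iteratedDeriv_iteratedDeriv]
      rw [hvan (i + (r:ℕ)) (by
        have h1 : (r : ℕ) ≤ t := Nat.lt_succ_iff.mp r.isLt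
        have h2 : i ≤ D := by omega
        omega), zero_div]
    rw [Matrix.det_apply']
    refine Finset.dvd_sum fun σ _ => ?_
    refine Dvd.dvd.mul_left ?_ _
    have h1 : N' (σ (σ.symm klast)) (σ.symm klast) ∣ ∏ i, N' (σ i) i :=
      Finset.dvd_prod_of_mem (fun i => N' (σ i) i) (Finset.mem_univ (σ.symm klast))
    rw [Equiv.apply_symm_apply] at h1
    exact dvd_trans (hcol (σ.symm klast)) h1
  have hdvd2 : (PowerSeries.X : PowerSeries ℂ)^(D+1) ∣ (∏ k, τ k) * ψ Vmat.det := by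
    rw [← hNdet, ← hdet']; exact hdvd
  have hunit : IsUnit (∏ k, τ k) := by
    rw [PowerSeries.isUnit_iff_constantCoeff, map_prod]
    rw [isUnit_iff_ne_zero]
    apply Finset.prod_ne_zero_iff.mpr
    intro k _
    have : (PowerSeries.constantCoeff) (τ k) = Complex.exp ((Q k).eval 0) := by
      rw [hτ]
      have e : (PowerSeries.constantCoeff) (TS fun z => Complex.exp ((Q k).eval z))
          = PowerSeries.coeff 0 (TS fun z => Complex.exp ((Q k).eval z)) := by
        rw [PowerSeries.coeff_zero_eq_constantCoeff]
      rw [e, TS_coeff]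
      norm_num [iteratedDeriv_zero]
    rw [this]
    exact Complex.exp_ne_zero _
  obtain ⟨u, hu⟩ := hunit
  rw [← hu] at hdvd2
  have hdvd3 : (PowerSeries.X : PowerSeries ℂ)^(D+1) ∣ ψ Vmat.det :=
    (Units.dvd_mul_left).mp hdvd2
  apply hVne
  ext i
  rcases le_or_gt i D with hiD | hiD
  · have := (PowerSeries.X_pow_dvd_iff.mp hdvd3) i (by omega)
    rw [hψ] at this
    simp only [Polynomial.coeToPowerSeries.ringHom_apply, Polynomial.coeff_coe] at this
    simpa using this
  · simp [Polynomial.coeff_eq_zero_of_natDegree_lt (lt_of_le_of_lt hVdeg hiD)]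

end GEPaux
end

/-- The index set for the parameter space `ℂ^N`, `N = m(p+q+1)`: a parameter is a string
`((c_{ki})_{0≤i≤p},(d_{kj})_{1≤j≤q})_{1≤k≤m}`.  `Sum.inl (k,i)` indexes `c_{ki}` and
`Sum.inr (k,j)` indexes `d_{k(j+1)}`. -/
abbrev GEPIdx (p q m : ℕ) := (Fin m × Fin (p + 1)) ⊕ (Fin m × Fin q)

/-- The polynomial `P_k(z) = ∑_{i=0}^p c_{ki} z^i` determined by the parameter `l`. -/
noncomputable def gepP (p q m : ℕ) (l : GEPIdx p q m → ℂ) (k : Fin m) : Polynomial ℂ :=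
  ∑ i : Fin (p + 1), Polynomial.C (l (Sum.inl (k, i))) * Polynomial.X ^ (i : ℕ)

/-- The polynomial `Q_k(z) = ∑_{j=1}^q d_{kj} z^j` determined by the parameter `l`. -/
noncomputable def gepQ (p q m : ℕ) (l : GEPIdx p q m → ℂ) (k : Fin m) : Polynomial ℂ :=
  ∑ j : Fin q, Polynomial.C (l (Sum.inr (k, j))) * Polynomial.X ^ ((j : ℕ) + 1)

/-- The generalized exponential polynomial `f_λ(z) = ∑_{k=1}^m P_k(z) e^{Q_k(z)}`. -/
noncomputable def gep (p q m : ℕ) (l : GEPIdx p q m → ℂ) (z : ℂ) : ℂ :=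
  ∑ k : Fin m, (gepP p q m l k).eval z * Complex.exp ((gepQ p q m l k).eval z)

/-- The `n`-th Maclaurin coefficient `a_n(λ)` of `f_λ`. -/
noncomputable def gepCoeff (p q m : ℕ) (n : ℕ) (l : GEPIdx p q m → ℂ) : ℂ :=
  iteratedDeriv n (gep p q m l) 0 / n.factorial

/-- `c_{p,q,m} := m − 1 + mp + (1/2)m(m−1)(q−1)`. -/
def cpqm (p q m : ℕ) : ℕ := (m - 1) + m * p + m * (m - 1) * (q - 1) / 2

open Polynomial Finset GEPaux in
lemma gep_aux_natDegree_gepP (p q m : ℕ) (l : GEPIdx p q m → ℂ) (k : Fin m) :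
    (gepP p q m l k).natDegree ≤ p := by
  refine natDegree_sum_le_of_forall_le _ _ fun i _ => ?_
  refine le_trans natDegree_mul_le ?_
  simp only [natDegree_C, natDegree_X_pow, zero_add]
  exact Nat.lt_succ_iff.mp i.isLt

open Polynomial Finset GEPaux in
lemma gep_aux_natDegree_gepQ (p q m : ℕ) (l : GEPIdx p q m → ℂ) (k : Fin m) :
    (gepQ p q m l k).natDegree ≤ q := by
  refine natDegree_sum_le_of_forall_le _ _ fun j _ => ?_
  refine le_trans natDegree_mul_le ?_
  simp only [natDegree_C, natDegree_X_pow, zero_add]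
  exact j.isLt

open Polynomial Finset GEPaux in
lemma gep_aux_gepQ_coeff_zero (p q m : ℕ) (l : GEPIdx p q m → ℂ) (k : Fin m) :
    (gepQ p q m l k).coeff 0 = 0 := by
  rw [gepQ, finset_sum_coeff]
  refine Finset.sum_eq_zero fun j _ => ?_
  rw [coeff_C_mul, coeff_X_pow]
  simp

/-- The central set of the family of generalized exponential polynomials equals the common
zero set of its first `c_{p,q,m}+1` Maclaurin coefficients:
`{λ : f_λ ≡ 0} = {λ : a₀(λ) = ⋯ = a_{c_{p,q,m}}(λ) = 0}`. -/
theorem centralSet_gep_eq_common_zeros (p q m : ℕ) (hq : 1 ≤ q) (hm : 1 ≤ m) :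
    {l : GEPIdx p q m → ℂ | ∀ z : ℂ, gep p q m l z = 0}
      = {l : GEPIdx p q m → ℂ | ∀ n ≤ cpqm p q m, gepCoeff p q m n l = 0} := by
  classical
  ext l
  simp only [Set.mem_setOf_eq]
  constructor
  · intro h n _
    have hfz : gep p q m l = fun _ => (0:ℂ) := funext h
    simp [gepCoeff, hfz, GEPaux.iteratedDeriv_zero_fun]
  · intro h z
    open Polynomial Finset GEPaux in
    set Pl := gepP p q m l with hPl
    set Ql := gepQ p q m l with hQl
    set img : Finset (Polynomial ℂ) := Finset.image Ql Finset.univ with himg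
    set Psum : Polynomial ℂ → Polynomial ℂ :=
      fun u => ∑ k ∈ Finset.univ.filter (fun k => Ql k = u), Pl k with hPsum
    set S : Finset (Polynomial ℂ) := img.filter (fun u => Psum u ≠ 0) with hS
    have hgep : ∀ w : ℂ, gep p q m l w
        = ∑ u ∈ S, (Psum u).eval w * Complex.exp (u.eval w) := by
      intro w
      rw [gep]
      have h1 : ∑ k : Fin m, (Pl k).eval w * Complex.exp ((Ql k).eval w)
          = ∑ u ∈ img, ∑ k ∈ Finset.univ.filter (fun k => Ql k = u),
              (Pl k).eval w * Complex.exp ((Ql k).eval w) := by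
        rw [Finset.sum_fiberwise_of_maps_to (fun k _ => Finset.mem_image_of_mem Ql (Finset.mem_univ k))]
      rw [h1]
      have h2 : ∀ u ∈ img, ∑ k ∈ Finset.univ.filter (fun k => Ql k = u),
          (Pl k).eval w * Complex.exp ((Ql k).eval w)
          = (Psum u).eval w * Complex.exp (u.eval w) := by
        intro u _
        rw [hPsum, eval_finset_sum, Finset.sum_mul]
        refine Finset.sum_congr rfl fun k hk => ?_
        rw [(Finset.mem_filter.mp hk).2]
      rw [Finset.sum_congr rfl h2]
      rw [hS]
      refine (Finset.sum_filter_of_ne fun u _ hne => ?_).symm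
      intro hu0
      exact hne (by rw [hu0]; simp)
    -- enumerate S
    set s₀ := S.card with hs₀
    set eS : {x // x ∈ S} ≃ Fin s₀ := S.equivFin with heS
    set Qv : Fin s₀ → Polynomial ℂ := fun j => ((eS.symm j : {x // x ∈ S}) : Polynomial ℂ) with hQv
    set Pv : Fin s₀ → Polynomial ℂ := fun j => Psum (Qv j) with hPv
    have hQvS : ∀ j, Qv j ∈ S := fun j => (eS.symm j).2
    have hgep2 : ∀ w : ℂ, gep p q m l w
        = ∑ j : Fin s₀, (Pv j).eval w * Complex.exp ((Qv j).eval w) := by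
      intro w
      rw [hgep w, ← Finset.sum_coe_sort S]
      exact (Equiv.sum_comp eS.symm
        (fun u : {x // x ∈ S} => (Psum (u : Polynomial ℂ)).eval w
          * Complex.exp ((u : Polynomial ℂ).eval w))).symm
    have hQvinj : Function.Injective Qv := by
      intro a b hab
      have := Subtype.coe_injective hab
      exact eS.symm.injective this
    have hP0 : ∀ j, Pv j ≠ 0 := by
      intro j
      have := (Finset.mem_filter.mp (hQvS j)).2
      simpa [hPv] using this
    have hPd : ∀ j, (Pv j).natDegree ≤ p := by
      intro j
      rw [hPv, hPsum]
      exact natDegree_sum_le_of_forall_le _ _ fun k _ => gep_aux_natDegree_gepP p q m l k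
    have hQimg : ∀ j, ∃ k : Fin m, Ql k = Qv j := by
      intro j
      have := (Finset.mem_filter.mp (hQvS j)).1
      obtain ⟨k, _, hk⟩ := Finset.mem_image.mp this
      exact ⟨k, hk⟩
    have hQd : ∀ j, (Qv j).natDegree ≤ q := by
      intro j
      obtain ⟨k, hk⟩ := hQimg j
      rw [← hk]
      exact gep_aux_natDegree_gepQ p q m l k
    have hQc0 : ∀ j, (Qv j).coeff 0 = 0 := by
      intro j
      obtain ⟨k, hk⟩ := hQimg j
      rw [← hk]
      exact gep_aux_gepQ_coeff_zero p q m l k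
    have hQder : ∀ j j', j ≠ j' → derivative (Qv j) ≠ derivative (Qv j') := by
      intro j j' hjj heq
      apply hjj
      apply hQvinj
      have hd0 : derivative (Qv j - Qv j') = 0 := by
        rw [derivative_sub, heq, sub_self]
      have hnd : (Qv j - Qv j').natDegree = 0 :=
        natDegree_eq_zero_of_derivative_eq_zero hd0
      have hC := Polynomial.eq_C_of_natDegree_eq_zero hnd
      have hc0 : (Qv j - Qv j').coeff 0 = 0 := by
        rw [coeff_sub, hQc0 j, hQc0 j', sub_self]
      have : Qv j - Qv j' = 0 := by rw [hC, hc0, map_zero]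
      exact sub_eq_zero.mp this
    have hsm : s₀ ≤ m := by
      rw [hs₀, hS]
      refine le_trans (Finset.card_filter_le _ _) ?_
      rw [himg]
      refine le_trans Finset.card_image_le ?_
      simp
    have hBle : (s₀ - 1) + (s₀ * p + (q-1) * (s₀ * (s₀ - 1) / 2)) ≤ cpqm p q m := by
      obtain ⟨c, hc⟩ := Nat.even_mul_succ_self (m - 1)
      obtain ⟨c', hc'⟩ := Nat.even_mul_succ_self (s₀ - 1)
      have hm1 : m - 1 + 1 = m := Nat.succ_pred_eq_of_pos hm
      rcases Nat.eq_zero_or_pos s₀ with h0 | hs0pos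
      · rw [h0]
        simp
      have hs1 : s₀ - 1 + 1 = s₀ := Nat.succ_pred_eq_of_pos hs0pos
      rw [hm1] at hc
      rw [hs1] at hc'
      have em : m * (m - 1) = 2 * c := by rw [mul_comm, hc, two_mul]
      have es : s₀ * (s₀ - 1) = 2 * c' := by rw [mul_comm, hc', two_mul]
      have hcc' : c' ≤ c := by
        have h1 : s₀ * (s₀ - 1) ≤ m * (m - 1) :=
          Nat.mul_le_mul hsm (Nat.sub_le_sub_right hsm 1)
        rw [em, es] at h1
        omega
      rw [cpqm, es, em, Nat.mul_div_cancel_left c' (by norm_num : 0 < 2), mul_assoc,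
        Nat.mul_div_cancel_left (c * (q-1)) (by norm_num : 0 < 2)]
      refine le_trans (add_le_add (Nat.sub_le_sub_right hsm 1)
        (add_le_add (Nat.mul_le_mul_right p hsm) (Nat.mul_le_mul_left (q-1) hcc'))) ?_
      rw [mul_comm (q-1) c, add_assoc]
    have hvan : ∀ n ≤ (s₀ - 1) + (s₀ * p + (q - 1) * (s₀ * (s₀ - 1) / 2)),
        iteratedDeriv n (fun w => ∑ j : Fin s₀, (Pv j).eval w * Complex.exp ((Qv j).eval w)) 0
          = 0 := by
      intro n hn
      have hfeq : (fun w => ∑ j : Fin s₀, (Pv j).eval w * Complex.exp ((Qv j).eval w))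
          = gep p q m l := funext fun w => (hgep2 w).symm
      rw [hfeq]
      have hcoeff := h n (le_trans hn hBle)
      rw [gepCoeff] at hcoeff
      have hfac : ((n.factorial : ℂ)) ≠ 0 := by exact_mod_cast n.factorial_ne_zero
      field_simp at hcoeff
      simpa using hcoeff
    have hs0 : s₀ = 0 := GEPaux.main_lemma p q s₀ Pv Qv hP0 hPd hQd hQder hvan
    haveI : IsEmpty (Fin s₀) := by rw [hs0]; infer_instance
    rw [hgep2 z, Finset.univ_eq_empty, Finset.sum_empty]
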